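/- For every natural number n, the Douglas–Rachford operator T satisfies T^{2n} = (T T*)^n (R_V R_U)^n and T^{2n+1} = (T T*)^n T (R_V R_U)^n = (T T*)^n T* (R_V R_U)^{n+1}. -/

import Mathlib

noncomputable section

variable {X : Type*} [NormedAddCommGroup X] [InnerProductSpace ℝ X] [CompleteSpace X]

/-- The orthogonal projection onto a closed subspace `W`, as an operator on `X`. -/
noncomputable def proj (W : Submodule ℝ X) [W.HasOrthogonalProjection] : X →L[ℝ] X :=
  W.subtypeL.comp (W.orthogonalProjectionOnto)

instance infHOP (U V : Submodule ℝ X) [CompleteSpace U] [CompleteSpace V] :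
    (U ⊓ V).HasOrthogonalProjection := by
  have hU : IsClosed (U : Set X) := (completeSpace_coe_iff_isComplete.mp ‹_›).isClosed
  have hV : IsClosed (V : Set X) := (completeSpace_coe_iff_isComplete.mp ‹_›).isClosed
  have : CompleteSpace (U ⊓ V : Submodule ℝ X) := (hU.inter hV).completeSpace_coe
  infer_instance

/-- The fixed point set `Fix T = {x | T x = x}` of a continuous linear operator `T`,
as a submodule of `X`. -/
noncomputable def fixedSpace (T : X →L[ℝ] X) : Submodule ℝ X := LinearMap.ker ((T - 1 : X →L[ℝ] X) : X →ₗ[ℝ] X)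

instance fixedSpaceHOP (T : X →L[ℝ] X) : (fixedSpace T).HasOrthogonalProjection := by
  have h : IsClosed ((fixedSpace T : Submodule ℝ X) : Set X) := by
    have : ((fixedSpace T : Submodule ℝ X) : Set X) = {x | T x = x} := by
      ext x; simp [fixedSpace, LinearMap.mem_ker, sub_eq_zero]
    rw [this]
    exact isClosed_eq T.continuous continuous_id
  have : CompleteSpace (fixedSpace T) := h.completeSpace_coe
  infer_instance

/-- The reflector `R_W = 2 P_W − Id` associated with `W`. -/
noncomputable def reflector (W : Submodule ℝ X) [W.HasOrthogonalProjection] : X →L[ℝ] X :=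
  2 • proj W - 1

/-- The Douglas–Rachford operator `T = T_{V,U} = P_V (2 P_U − Id) + Id − P_U`.
(The first argument is `U`, the second is `V`.) -/
noncomputable def drOperator (U V : Submodule ℝ X) [U.HasOrthogonalProjection]
    [V.HasOrthogonalProjection] : X →L[ℝ] X :=
  proj V * (2 • proj U - 1) + 1 - proj U

/-- The cosine of the Friedrichs angle between `U` and `V`. -/
noncomputable def friedrichs (U V : Submodule ℝ X) : ℝ :=
  sSup {c : ℝ | ∃ u v : X, u ∈ U ⊓ (U ⊓ V)ᗮ ∧ v ∈ V ⊓ (U ⊓ V)ᗮ ∧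
    ‖u‖ ≤ 1 ∧ ‖v‖ ≤ 1 ∧ c = inner ℝ u v}


section Aux

variable (U V : Submodule ℝ X) [CompleteSpace U] [CompleteSpace V]

lemma proj_mul_proj (W : Submodule ℝ X) [CompleteSpace W] : proj W * proj W = proj W := by
  ext x
  simp [proj, ContinuousLinearMap.mul_apply, Submodule.orthogonalProjectionOnto_mem_subspace_eq_self,
    Submodule.starProjection_eq_self_iff]

lemma star_proj (W : Submodule ℝ X) [CompleteSpace W] : star (proj W) = proj W :=
  isSelfAdjoint_starProjection W

lemma reflector_sq (W : Submodule ℝ X) [CompleteSpace W] :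
    reflector W * reflector W = 1 := by
  have h : (2 • proj W - 1) * (2 • proj W - 1)
      = (4 : ℕ) • (proj W * proj W) - (4 : ℕ) • proj W + 1 := by
    noncomm_ring
  rw [reflector, h, proj_mul_proj]
  simp

lemma star_reflector (W : Submodule ℝ X) [CompleteSpace W] :
    star (reflector W) = reflector W := by
  simp [reflector, star_sub, star_smul, star_proj]
  rw [mul_two, two_mul]

lemma two_smul_dr :
    (2 : ℝ) • drOperator U V = 1 + reflector V * reflector U := by
  have h : (1 : X →L[ℝ] X) + (2 • proj V - 1) * (2 • proj U - 1)
      = (2 : ℕ) • (proj V * (2 • proj U - 1) + 1 - proj U) := by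
    noncomm_ring
  rw [drOperator, reflector, reflector, h]
  ext x
  simp
  module

lemma dr_eq : drOperator U V = (2 : ℝ)⁻¹ • (1 + reflector V * reflector U) := by
  rw [← two_smul_dr, smul_smul]
  norm_num

lemma star_dr_eq :
    star (drOperator U V) = (2 : ℝ)⁻¹ • (1 + reflector U * reflector V) := by
  rw [dr_eq, star_smul, star_add, star_one, star_mul, star_reflector, star_reflector]
  simp

end Aux

set_option maxHeartbeats 1000000
set_option synthInstance.maxHeartbeats 400000

/-- for every natural number `n`, `T^{2n} = (T T*)^n (R_V R_U)^n` and
`T^{2n+1} = (T T*)^n T (R_V R_U)^n = (T T*)^n T* (R_V R_U)^{n+1}`. -/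
theorem drOperator_pow_decomposition
    (U V : Submodule ℝ X) [CompleteSpace U] [CompleteSpace V] (n : ℕ) :
    (drOperator U V) ^ (2 * n) =
      (drOperator U V * ContinuousLinearMap.adjoint (drOperator U V)) ^ n *
        (reflector V * reflector U) ^ n ∧
    (drOperator U V) ^ (2 * n + 1) =
      (drOperator U V * ContinuousLinearMap.adjoint (drOperator U V)) ^ n * drOperator U V *
        (reflector V * reflector U) ^ n ∧
    (drOperator U V) ^ (2 * n + 1) =
      (drOperator U V * ContinuousLinearMap.adjoint (drOperator U V)) ^ n *
        ContinuousLinearMap.adjoint (drOperator U V) * (reflector V * reflector U) ^ (n + 1) := by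
  set T := drOperator U V with hT
  set A := reflector V * reflector U with hA
  set B := reflector U * reflector V with hB
  have hAB : A * B = 1 := by
    rw [hA, hB, mul_assoc, ← mul_assoc (reflector U), reflector_sq, one_mul, reflector_sq]
  have hBA : B * A = 1 := by
    rw [hA, hB, mul_assoc, ← mul_assoc (reflector V), reflector_sq, one_mul, reflector_sq]
  have hTstar : ContinuousLinearMap.adjoint T = (2 : ℝ)⁻¹ • (1 + B) := by
    rw [← ContinuousLinearMap.star_eq_adjoint, hT, star_dr_eq, hB]
  have hTval : T = (2 : ℝ)⁻¹ • (1 + A) := dr_eq U V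
  -- T* * A = T and A * T* = T
  have hstarA : ContinuousLinearMap.adjoint T * A = T := by
    rw [hTstar, hTval, smul_mul_assoc, add_mul, one_mul, hBA, add_comm]
  have hAstar : A * ContinuousLinearMap.adjoint T = T := by
    rw [hTstar, hTval, mul_smul_comm, mul_add, mul_one, hAB, add_comm]
  have hcommTA : Commute T A := by
    rw [Commute, SemiconjBy, hTval, smul_mul_assoc, mul_smul_comm, add_mul, mul_add,
      one_mul, mul_one]
  have hcommSA : Commute (T * ContinuousLinearMap.adjoint T) A := by
    have h2 : Commute (ContinuousLinearMap.adjoint T) A := by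
      rw [Commute, SemiconjBy, hstarA, hAstar]
    exact hcommTA.mul_left h2
  have hT2 : T * T = T * ContinuousLinearMap.adjoint T * A := by
    rw [mul_assoc, hstarA]
  have key : T ^ (2 * n) = (T * ContinuousLinearMap.adjoint T) ^ n * A ^ n := by
    rw [pow_mul, sq, hT2, hcommSA.mul_pow]
  have hpow : A ^ n * T = T * A ^ n := (hcommTA.symm.pow_left n).eq
  have hstep : T ^ (2 * n + 1)
      = (T * ContinuousLinearMap.adjoint T) ^ n * T * A ^ n := by
    rw [pow_succ, key, mul_assoc, hpow, ← mul_assoc]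
  have h3 : ContinuousLinearMap.adjoint T * A ^ (n + 1) = T * A ^ n := by
    rw [pow_succ' A n, ← mul_assoc, hstarA]
  refine ⟨key, hstep, ?_⟩
  rw [hstep, mul_assoc, ← h3, ← mul_assoc]
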